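/- Fix d ≥ 2 and let Φ: [0,1]^d → C be the digit-interleaving map into the Cantor set. Then for all x, y in the image of Φ, ‖Φ^{-1}(x) − Φ^{-1}(y)‖_∞ ≤ 2 |x − y|^{log 2 / (d log 3)}. -/

import Mathlib

open Set Filter Topology MeasureTheory

noncomputable section

/-- The unit cube `[0,1]^d`. -/
def cube (d : ℕ) : Set (Fin d → ℝ) := {x | ∀ p, x p ∈ Set.Icc (0:ℝ) 1}

/-- The Cantor middle-thirds set: reals admitting a ternary expansion with digits in `{0,2}`. -/
def CantorSet : Set ℝ :=
  {y | ∃ t : ℕ → ℕ, (∀ j, t j = 0 ∨ t j = 2) ∧ y = ∑' j : ℕ, (t j : ℝ) / 3 ^ (j + 1)}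

/-- `a` assigns to each `x ∈ [0,1]` a fixed binary expansion (`a x j` is the digit `a_{j+1}^x`). -/
def IsBinaryExp (a : ℝ → ℕ → ℕ) : Prop :=
  ∀ x ∈ Set.Icc (0:ℝ) 1, (∀ j, a x j ≤ 1) ∧ x = ∑' j : ℕ, (a x j : ℝ) / 2 ^ (j + 1)

/-- `φ(x) = ∑_{j≥1} 2 a_j^x 3^{-d(j-1)}`. -/
def phiFun (d : ℕ) (a : ℝ → ℕ → ℕ) (x : ℝ) : ℝ := ∑' j : ℕ, (2 * a x j : ℝ) / 3 ^ (d * j)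

/-- `Φ(x_1,…,x_d) = ∑_{p=1}^d 3^{-p} φ(x_p)`. -/
def PhiFun (d : ℕ) (a : ℝ → ℕ → ℕ) (x : Fin d → ℝ) : ℝ :=
  ∑ p : Fin d, phiFun d a (x p) / 3 ^ ((p : ℕ) + 1)

lemma summable_of_abs_le_geom (g : ℕ → ℝ) (M r : ℝ) (hr0 : 0 ≤ r) (hr1 : r < 1)
    (h : ∀ k, |g k| ≤ M * r ^ (k + 1)) : Summable g := by
  have hs : Summable fun k : ℕ => M * r ^ (k + 1) := by
    have : Summable fun k : ℕ => (M * r) * r ^ k :=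
      (summable_geometric_of_lt_one hr0 hr1).mul_left _
    simpa [mul_pow, pow_succ, mul_comm, mul_assoc, mul_left_comm] using this
  exact Summable.of_abs (Summable.of_nonneg_of_le (fun k => abs_nonneg _) h hs)

lemma abs_tsum_tail_le (g : ℕ → ℝ) (M r : ℝ) (hr0 : 0 ≤ r) (hr1 : r < 1)
    (h : ∀ k, |g k| ≤ M * r ^ (k + 1)) (m : ℕ) :
    |∑' k : ℕ, g (k + m)| ≤ M * r ^ (m + 1) * (1 - r)⁻¹ := by
  have hg : Summable g := summable_of_abs_le_geom g M r hr0 hr1 h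
  have hga : Summable fun k => |g k| := hg.abs
  have hs : Summable fun k : ℕ => g (k + m) := (summable_nat_add_iff m).2 hg
  have hsa : Summable fun k : ℕ => |g (k + m)| := (summable_nat_add_iff m).2 hga
  calc |∑' k : ℕ, g (k + m)| ≤ ∑' k : ℕ, |g (k + m)| := by
        have := norm_tsum_le_tsum_norm (f := fun k : ℕ => g (k + m))
          (by simpa only [Real.norm_eq_abs] using hsa)
        simpa only [Real.norm_eq_abs] using this
    _ ≤ ∑' k : ℕ, (M * r ^ (m + 1)) * r ^ k := by
        apply Summable.tsum_le_tsum _ hsa (((summable_geometric_of_lt_one hr0 hr1)).mul_left _)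
        intro k
        calc |g (k + m)| ≤ M * r ^ (k + m + 1) := h _
          _ = (M * r ^ (m + 1)) * r ^ k := by ring
    _ = M * r ^ (m + 1) * (1 - r)⁻¹ := by
        rw [tsum_mul_left, tsum_geometric_of_lt_one hr0 hr1]

lemma abs_div_pow_le {b : ℝ} (hb : 0 < b) (x M : ℝ) (h : |x| ≤ M) (k : ℕ) :
    |x / b ^ k| ≤ M * (1 / b) ^ k := by
  rw [abs_div, abs_of_pos (pow_pos hb k), div_pow, one_pow, mul_one_div]
  gcongr

lemma abs_div_pow_eq {b : ℝ} (hb : 0 < b) (x M : ℝ) (h : |x| = M) (k : ℕ) :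
    |x / b ^ k| = M * (1 / b) ^ k := by
  rw [abs_div, abs_of_pos (pow_pos hb k), div_pow, one_pow, mul_one_div, h]

/-- difference of two digit series with digits in {0,2}, base 3: separation. -/
lemma cantor_sep (c c' : ℕ → ℕ) (hc : ∀ k, c k = 0 ∨ c k = 2) (hc' : ∀ k, c' k = 0 ∨ c' k = 2)
    (N : ℕ)
    (h : |(∑' k : ℕ, (c k : ℝ) / 3 ^ (k + 1)) - ∑' k : ℕ, (c' k : ℝ) / 3 ^ (k + 1)|
      < (1/3 : ℝ) ^ N) :
    ∀ k < N, c k = c' k := by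
  by_contra hcon
  push_neg at hcon
  obtain ⟨k0, hk0N, hk0⟩ := hcon
  have hP : ∃ k, c k ≠ c' k := ⟨k0, hk0⟩
  classical
  set m := Nat.find hP with hm
  have hmne : c m ≠ c' m := Nat.find_spec hP
  have hmin : ∀ k < m, c k = c' k := fun k hk => not_not.1 (Nat.find_min hP hk)
  have hmN : m < N := lt_of_le_of_lt (Nat.find_min' hP hk0) hk0N
  set g : ℕ → ℝ := fun k => ((c k : ℝ) - c' k) / 3 ^ (k + 1) with hgdef
  have habs : ∀ k, |g k| ≤ 2 * (1/3 : ℝ) ^ (k + 1) := by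
    intro k
    apply abs_div_pow_le (by norm_num)
    rcases hc k with h1 | h1 <;> rcases hc' k with h1' | h1' <;> rw [h1, h1'] <;> norm_num
  have hgs : Summable g := summable_of_abs_le_geom g 2 (1/3) (by norm_num) (by norm_num) habs
  have h3s : ∀ (b : ℕ → ℕ), (∀ k, b k = 0 ∨ b k = 2) →
      Summable fun k : ℕ => (b k : ℝ) / 3 ^ (k + 1) := by
    intro b hb
    apply summable_of_abs_le_geom _ 2 (1/3) (by norm_num) (by norm_num)
    intro k
    apply abs_div_pow_le (by norm_num)
    rcases hb k with h1 | h1 <;> rw [h1] <;> norm_num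
  have hc3 := h3s c hc
  have hc3' := h3s c' hc'
  have hD : (∑' k : ℕ, (c k : ℝ) / 3 ^ (k + 1)) - (∑' k : ℕ, (c' k : ℝ) / 3 ^ (k + 1))
      = ∑' k, g k := by
    rw [← Summable.tsum_sub hc3 hc3']
    congr 1; funext k; rw [hgdef]; ring
  have hsplit := Summable.sum_add_tsum_nat_add (m + 1) hgs
  have hfin : ∑ i ∈ Finset.range (m + 1), g i = g m := by
    rw [Finset.sum_range_succ]
    have : ∑ i ∈ Finset.range m, g i = 0 := by
      apply Finset.sum_eq_zero
      intro i hi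
      rw [hgdef]
      simp [hmin i (Finset.mem_range.1 hi)]
    rw [this, zero_add]
  have hgm : |g m| = 2 * (1/3 : ℝ) ^ (m + 1) := by
    apply abs_div_pow_eq (by norm_num)
    rcases hc m with h1 | h1 <;> rcases hc' m with h1' | h1' <;>
      first
      | (exact absurd (h1.trans h1'.symm) hmne)
      | (rw [h1, h1']; norm_num)
  have htail : |∑' k : ℕ, g (k + (m + 1))| ≤ (1/3 : ℝ) ^ (m + 1) := by
    have := abs_tsum_tail_le g 2 (1/3) (by norm_num) (by norm_num) habs (m + 1)
    calc |∑' k : ℕ, g (k + (m + 1))| ≤ 2 * (1/3:ℝ) ^ (m + 1 + 1) * (1 - 1/3)⁻¹ := this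
      _ = (1/3 : ℝ) ^ (m + 1) := by rw [pow_succ]; norm_num; ring
  have hge : (1/3 : ℝ) ^ (m + 1) ≤ |(∑' k : ℕ, (c k : ℝ) / 3 ^ (k + 1)) -
      ∑' k : ℕ, (c' k : ℝ) / 3 ^ (k + 1)| := by
    rw [hD, ← hsplit, hfin]
    have h1 : |g m| ≤ |g m + ∑' k : ℕ, g (k + (m + 1))| + |∑' k : ℕ, g (k + (m + 1))| := by
      have := abs_sub (g m + ∑' k : ℕ, g (k + (m + 1))) (∑' k : ℕ, g (k + (m + 1)))
      simpa using this
    rw [hgm] at h1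
    linarith
  have hNle : (1/3 : ℝ) ^ N ≤ (1/3 : ℝ) ^ (m + 1) :=
    pow_le_pow_of_le_one (by norm_num) (by norm_num) (by omega)
  linarith [lt_of_le_of_lt hge h]

/-- binary closeness: digits in {0,1} agreeing below n. -/
lemma binary_close (c c' : ℕ → ℕ) (hc : ∀ j, c j ≤ 1) (hc' : ∀ j, c' j ≤ 1) (n : ℕ)
    (hagree : ∀ j < n, c j = c' j) :
    |(∑' j : ℕ, (c j : ℝ) / 2 ^ (j + 1)) - ∑' j : ℕ, (c' j : ℝ) / 2 ^ (j + 1)|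
      ≤ (1/2 : ℝ) ^ n := by
  set g : ℕ → ℝ := fun j => ((c j : ℝ) - c' j) / 2 ^ (j + 1) with hgdef
  have habs : ∀ j, |g j| ≤ 1 * (1/2 : ℝ) ^ (j + 1) := by
    intro j
    apply abs_div_pow_le (by norm_num)
    have := hc j; have := hc' j
    interval_cases h : c j <;> interval_cases h' : c' j <;> norm_num
  have hgs : Summable g := summable_of_abs_le_geom g 1 (1/2) (by norm_num) (by norm_num) habs
  have h2s : ∀ (b : ℕ → ℕ), (∀ j, b j ≤ 1) → Summable fun j : ℕ => (b j : ℝ) / 2 ^ (j + 1) := by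
    intro b hb
    apply summable_of_abs_le_geom _ 1 (1/2) (by norm_num) (by norm_num)
    intro j
    apply abs_div_pow_le (by norm_num)
    rw [abs_of_nonneg (by positivity)]
    exact_mod_cast hb j
  have hD : (∑' j : ℕ, (c j : ℝ) / 2 ^ (j + 1)) - (∑' j : ℕ, (c' j : ℝ) / 2 ^ (j + 1))
      = ∑' j, g j := by
    rw [← Summable.tsum_sub (h2s c hc) (h2s c' hc')]
    congr 1; funext j; rw [hgdef]; ring
  rw [hD, ← Summable.sum_add_tsum_nat_add n hgs]
  have hfin : ∑ i ∈ Finset.range n, g i = 0 := by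
    apply Finset.sum_eq_zero
    intro i hi
    rw [hgdef]
    simp [hagree i (Finset.mem_range.1 hi)]
  rw [hfin, zero_add]
  calc |∑' k : ℕ, g (k + n)| ≤ 1 * (1/2:ℝ) ^ (n + 1) * (1 - 1/2)⁻¹ :=
        abs_tsum_tail_le g 1 (1/2) (by norm_num) (by norm_num) habs n
    _ = (1/2 : ℝ) ^ n := by rw [pow_succ]; ring


/-- interleaved ternary digits of `Φ(u)` -/
def interDigit (d : ℕ) (hd : 0 < d) (a : ℝ → ℕ → ℕ) (u : Fin d → ℝ) (k : ℕ) : ℕ :=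
  2 * a (u ⟨k % d, Nat.mod_lt k hd⟩) (k / d)

lemma interDigit_mul_add (d : ℕ) (hd : 0 < d) (a : ℝ → ℕ → ℕ) (u : Fin d → ℝ)
    (j : ℕ) (p : Fin d) :
    interDigit d hd a u (j * d + (p : ℕ)) = 2 * a (u p) j := by
  have h1 : (⟨(j * d + (p : ℕ)) % d, Nat.mod_lt _ hd⟩ : Fin d) = p := by
    apply Fin.ext
    simp only []
    rw [Nat.add_comm, Nat.add_mul_mod_self_right, Nat.mod_eq_of_lt p.isLt]
  have h2 : (j * d + (p : ℕ)) / d = j := by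
    rw [mul_comm, Nat.mul_add_div hd, Nat.div_eq_of_lt p.isLt, Nat.add_zero]
  rw [interDigit, h1, h2]

set_option maxHeartbeats 1000000 in
lemma PhiFun_eq (d : ℕ) (hd : 0 < d) (a : ℝ → ℕ → ℕ) (u : Fin d → ℝ)
    (hdig : ∀ p j, a (u p) j ≤ 1) :
    PhiFun d a u = ∑' k : ℕ, (interDigit d hd a u k : ℝ) / 3 ^ (k + 1) := by
  haveI : NeZero d := ⟨hd.ne'⟩
  set F : ℕ → ℝ := fun k => (interDigit d hd a u k : ℝ) / 3 ^ (k + 1) with hF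
  have hdig2 : ∀ k, (interDigit d hd a u k : ℝ) ≤ 2 := by
    intro k
    have := hdig ⟨k % d, Nat.mod_lt k hd⟩ (k / d)
    rw [interDigit]
    exact_mod_cast Nat.mul_le_mul_left 2 this
  have habs : ∀ k, |F k| ≤ 2 * (1/3 : ℝ) ^ (k + 1) := by
    intro k
    apply abs_div_pow_le (by norm_num)
    rw [abs_of_nonneg (by positivity)]
    exact hdig2 k
  have hFs : Summable F := summable_of_abs_le_geom F 2 (1/3) (by norm_num) (by norm_num) habs
  set e := Nat.divModEquiv d with he
  have hGs : Summable fun q : ℕ × Fin d => F (e.symm q) := e.symm.summable_iff.2 hFs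
  have h1 : ∑' q : ℕ × Fin d, F (e.symm q) = ∑' k, F k := e.symm.tsum_eq F
  have hval : ∀ (j : ℕ) (p : Fin d),
      F (e.symm (j, p)) = (2 * a (u p) j : ℝ) / 3 ^ (d * j) / 3 ^ ((p : ℕ) + 1) := by
    intro j p
    have hsymm : e.symm (j, p) = j * d + (p : ℕ) := rfl
    rw [hF]
    simp only [hsymm]
    rw [interDigit_mul_add d hd a u j p]
    push_cast
    rw [div_div, ← pow_add]
    congr 2
    ring
  have hfiber : ∀ (p : Fin d), Summable fun j : ℕ => F (e.symm (j, p)) := by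
    intro p
    apply summable_of_abs_le_geom _ 2 (1/3) (by norm_num) (by norm_num)
    intro j
    have hb : ∀ q : ℕ × Fin d, |F (e.symm q)| ≤ 2 * (1/3 : ℝ) ^ (e.symm q + 1) := fun q => habs _
    calc |F (e.symm (j, p))| ≤ 2 * (1/3 : ℝ) ^ ((e.symm (j, p) : ℕ) + 1) := habs _
      _ ≤ 2 * (1/3 : ℝ) ^ (j + 1) := by
          apply mul_le_mul_of_nonneg_left _ (by norm_num)
          apply pow_le_pow_of_le_one (by norm_num) (by norm_num)
          have hsymm : (e.symm (j, p) : ℕ) = j * d + (p : ℕ) := rfl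
          rw [hsymm]
          have : j ≤ j * d := Nat.le_mul_of_pos_right j hd
          omega
  calc PhiFun d a u = ∑ p : Fin d, phiFun d a (u p) / 3 ^ ((p : ℕ) + 1) := rfl
    _ = ∑ p : Fin d, ∑' j : ℕ, F (e.symm (j, p)) := by
        apply Finset.sum_congr rfl
        intro p _
        rw [phiFun, ← tsum_div_const]
        exact tsum_congr fun j => (hval j p).symm
    _ = ∑' j : ℕ, ∑ p : Fin d, F (e.symm (j, p)) := by
        rw [Summable.tsum_finsetSum]
        intro p _
        exact hfiber p
    _ = ∑' j : ℕ, ∑' p : Fin d, F (e.symm (j, p)) := by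
        exact tsum_congr fun j => (tsum_fintype _).symm
    _ = ∑' q : ℕ × Fin d, F (e.symm q) := (Summable.tsum_prod' hGs (fun j => Summable.of_finite)).symm
    _ = ∑' k, F k := h1


lemma keyA (d : ℕ) (hd : 0 < d) (a : ℝ → ℕ → ℕ) (ha : IsBinaryExp a) (u v : Fin d → ℝ)
    (hu : u ∈ cube d) (hv : v ∈ cube d) (n : ℕ)
    (h : |PhiFun d a u - PhiFun d a v| < (1/3 : ℝ) ^ (d * n)) :
    ‖u - v‖ ≤ (1/2 : ℝ) ^ n := by
  have hud : ∀ p j, a (u p) j ≤ 1 := fun p j => (ha (u p) (hu p)).1 j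
  have hvd : ∀ p j, a (v p) j ≤ 1 := fun p j => (ha (v p) (hv p)).1 j
  rw [PhiFun_eq d hd a u hud, PhiFun_eq d hd a v hvd] at h
  have h02 : ∀ (w : Fin d → ℝ) (hw : ∀ p j, a (w p) j ≤ 1) (k : ℕ),
      interDigit d hd a w k = 0 ∨ interDigit d hd a w k = 2 := by
    intro w hw k
    have := hw ⟨k % d, Nat.mod_lt k hd⟩ (k / d)
    rw [interDigit]
    omega
  have hsep := cantor_sep _ _ (h02 u hud) (h02 v hvd) (d * n) h
  have hagree : ∀ (p : Fin d), ∀ j < n, a (u p) j = a (v p) j := by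
    intro p j hj
    have hk : j * d + (p : ℕ) < d * n := by
      have h1 : j * d + (p : ℕ) < (j + 1) * d := by
        have := p.isLt; nlinarith
      have h2 : (j + 1) * d ≤ n * d := Nat.mul_le_mul_right d (by omega)
      calc j * d + (p : ℕ) < (j + 1) * d := h1
        _ ≤ n * d := h2
        _ = d * n := Nat.mul_comm n d
    have := hsep (j * d + (p : ℕ)) hk
    have h1 : (⟨(j * d + (p : ℕ)) % d, Nat.mod_lt _ hd⟩ : Fin d) = p := by
      apply Fin.ext
      simp only []
      rw [Nat.add_comm, Nat.add_mul_mod_self_right, Nat.mod_eq_of_lt p.isLt]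
    have h2 : (j * d + (p : ℕ)) / d = j := by
      rw [mul_comm, Nat.mul_add_div hd, Nat.div_eq_of_lt p.isLt, Nat.add_zero]
    rw [interDigit, interDigit, h1, h2] at this
    omega
  rw [pi_norm_le_iff_of_nonneg (by positivity)]
  intro p
  rw [Pi.sub_apply, Real.norm_eq_abs]
  have hup : u p = ∑' j : ℕ, (a (u p) j : ℝ) / 2 ^ (j + 1) := (ha (u p) (hu p)).2
  have hvp : v p = ∑' j : ℕ, (a (v p) j : ℝ) / 2 ^ (j + 1) := (ha (v p) (hv p)).2
  rw [hup, hvp]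
  exact binary_close _ _ (hud p) (hvd p) n (hagree p)

lemma rpow_third_pow (d m : ℕ) (hd : 0 < d) :
    ((1/3 : ℝ) ^ (d * m)) ^ (Real.log 2 / (d * Real.log 3)) = (1/2 : ℝ) ^ m := by
  have h3 : (0:ℝ) < Real.log 3 := Real.log_pos (by norm_num)
  rw [← Real.rpow_natCast ((1/3 : ℝ)) (d * m), ← Real.rpow_natCast ((1/2 : ℝ)) m,
    ← Real.rpow_mul (by norm_num : (0:ℝ) ≤ 1/3)]
  rw [Real.rpow_def_of_pos (by norm_num : (0:ℝ) < 1/3),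
    Real.rpow_def_of_pos (by norm_num : (0:ℝ) < 1/2)]
  congr 1
  have hl3 : Real.log (1/3) = -Real.log 3 := by rw [one_div, Real.log_inv]
  have hl2 : Real.log (1/2) = -Real.log 2 := by rw [one_div, Real.log_inv]
  rw [hl3, hl2]
  have hd' : (d : ℝ) ≠ 0 := Nat.cast_ne_zero.2 hd.ne'
  push_cast
  field_simp


/-- Fix `d ≥ 2`. For the digit-interleaving map `Φ` into the Cantor set and
all `x, y` in the image of `Φ`, `‖Φ⁻¹(x) − Φ⁻¹(y)‖_∞ ≤ 2 |x − y|^{log 2/(d log 3)}`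
(`‖·‖` is the sup-norm on `Fin d → ℝ`). -/
theorem stmt5 (d : ℕ) (hd : 2 ≤ d) (a : ℝ → ℕ → ℕ) (ha : IsBinaryExp a) :
    ∀ x ∈ PhiFun d a '' cube d, ∀ y ∈ PhiFun d a '' cube d,
      ‖Function.invFunOn (PhiFun d a) (cube d) x - Function.invFunOn (PhiFun d a) (cube d) y‖
        ≤ 2 * |x - y| ^ (Real.log 2 / (d * Real.log 3)) := by
  intro x hx y hy
  have hd0 : 0 < d := by omega
  obtain ⟨ux, huxc, huxe⟩ := hx
  obtain ⟨uy, huyc, huye⟩ := hy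
  have hex : ∃ a' ∈ cube d, PhiFun d a a' = x := ⟨ux, huxc, huxe⟩
  have hey : ∃ a' ∈ cube d, PhiFun d a a' = y := ⟨uy, huyc, huye⟩
  set u := Function.invFunOn (PhiFun d a) (cube d) x with hu
  set v := Function.invFunOn (PhiFun d a) (cube d) y with hv
  have huc : u ∈ cube d := Function.invFunOn_mem hex
  have hvc : v ∈ cube d := Function.invFunOn_mem hey
  have hfu : PhiFun d a u = x := Function.invFunOn_eq hex
  have hfv : PhiFun d a v = y := Function.invFunOn_eq hey
  rcases eq_or_ne x y with hxy | hxy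
  · have huv : u = v := by rw [hu, hv, hxy]
    rw [hxy, huv]
    simp only [sub_self, norm_zero, abs_zero]
    have h2 := Real.log_pos (by norm_num : (1:ℝ) < 2)
    have h3 := Real.log_pos (by norm_num : (1:ℝ) < 3)
    have hd' : (0:ℝ) < d := by exact_mod_cast hd0
    rw [Real.zero_rpow (by positivity)]
    norm_num
  · have ht : 0 < |x - y| := abs_pos.2 (sub_ne_zero.2 hxy)
    -- find minimal n with (1/3)^(d*(n+1)) ≤ |x - y|
    have hPex : ∃ n : ℕ, (1/3 : ℝ) ^ (d * (n + 1)) ≤ |x - y| := by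
      obtain ⟨m, hm⟩ := exists_pow_lt_of_lt_one ht (by norm_num : (1/3 : ℝ) < 1)
      exact ⟨m, le_trans (pow_le_pow_of_le_one (by norm_num) (by norm_num)
        (by nlinarith : m ≤ d * (m + 1))) hm.le⟩
    classical
    set n := Nat.find hPex with hn
    have hPn : (1/3 : ℝ) ^ (d * (n + 1)) ≤ |x - y| := Nat.find_spec hPex
    -- RHS bound
    have hrhs : (1/2 : ℝ) ^ (n + 1) ≤ |x - y| ^ (Real.log 2 / (d * Real.log 3)) := by
      rw [← rpow_third_pow d (n + 1) hd0]
      apply Real.rpow_le_rpow (by positivity) hPn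
      have h2 : (0:ℝ) < Real.log 2 := Real.log_pos (by norm_num)
      have h3 : (0:ℝ) < Real.log 3 := Real.log_pos (by norm_num)
      positivity
    -- LHS bound
    have hlhs : ‖u - v‖ ≤ (1/2 : ℝ) ^ n := by
      rcases Nat.eq_zero_or_pos n with hn0 | hn0
      · rw [hn0, pow_zero]
        rw [pi_norm_le_iff_of_nonneg (by norm_num)]
        intro p
        rw [Pi.sub_apply, Real.norm_eq_abs]
        have h1 := huc p; have h2 := hvc p
        rw [Set.mem_Icc] at h1 h2
        rw [abs_le]; constructor <;> linarith [h1.1, h1.2, h2.1, h2.2]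
      · have hmin : ¬ ((1/3 : ℝ) ^ (d * (n - 1 + 1)) ≤ |x - y|) :=
          Nat.find_min hPex (by omega)
        have hlt : |x - y| < (1/3 : ℝ) ^ (d * n) := by
          push_neg at hmin
          have : d * (n - 1 + 1) = d * n := by congr 1; omega
          rwa [this] at hmin
        have := keyA d hd0 a ha u v huc hvc n (by rw [hfu, hfv]; exact hlt)
        exact this
    calc ‖u - v‖ ≤ (1/2 : ℝ) ^ n := hlhs
      _ = 2 * (1/2 : ℝ) ^ (n + 1) := by rw [pow_succ]; ring
      _ ≤ 2 * |x - y| ^ (Real.log 2 / (d * Real.log 3)) := by linarith [hrhs]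


end
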